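/- arXiv:2008.09490 — 9 statements merged into one kernel-verified Lean document; each statement's English description precedes it below -/
import Mathlib

section
/- Let the correlation sets all have size at most 2 and let K be a cover for C. Fix i ∈ {1,...,k} and b ∈ {0,1}, and for each j such that (i,j,b) is a dichotomy and {i,j} ∈ C define X^{i,j}_b = μ_i^{s₂} − μ_i^{s₁} where (s₁,s₂) is any (i,j,b)-pair (so s₁(j)=0 and s₂(j)=1); set X^{i,j}_b = 0 when {i,j} ∉ C. Then for every state s ∈ S with s(i) = b and every state s'' ∈ K with s''(i) = b, one has μ_i^s = μ_i^{s''} + Σ_{j=1}^k X^{i,j}_b · [1(s(j)=1)·1(s''(j)=0) − 1(s(j)=0)·1(s''(j)=1)]. -/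
open scoped BigOperators

/-- A state: a Boolean assignment to the `k` fairness criteria whose set of fixed
criteria is an independent set of the incompatibility graph `G`. -/
def ValidState {k : ℕ} (G : SimpleGraph (Fin k)) (s : Fin k → Bool) : Prop :=
  ∀ i j : Fin k, s i = true → s j = true → ¬ G.Adj i j

/-- A parameter assignment: nonnegative parameters `θ j s` such that `θ j s = θ j s'`
whenever the states `s` and `s'` agree on all coordinates of the correlation set `C j`. -/
def ParamAssignment {k n : ℕ} (G : SimpleGraph (Fin k)) (Cset : Fin n → Finset (Fin k))
    (θ : Fin n → (Fin k → Bool) → ℝ) : Prop :=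
  (∀ (j : Fin n) (s : Fin k → Bool), ValidState G s → 0 ≤ θ j s) ∧
  (∀ (j : Fin n) (s s' : Fin k → Bool), ValidState G s → ValidState G s' →
    (∀ l ∈ Cset j, s l = s' l) → θ j s = θ j s')

/-- The mean loss of criterion `i` at state `s`: `μ_i^s = ∑_j θ_j^s · 1(i ∈ C_j)`. -/
def meanLoss {k n : ℕ} (Cset : Fin n → Finset (Fin k))
    (θ : Fin n → (Fin k → Bool) → ℝ) (i : Fin k) (s : Fin k → Bool) : ℝ :=
  ∑ j : Fin n, if i ∈ Cset j then θ j s else 0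

/-- An `(i,j,b)`-pair: valid states `(s, s')` agreeing on all coordinates other than `j`,
with `s i = s' i = b`, `s j = 0` and `s' j = 1`. -/
def IsPair {k : ℕ} (G : SimpleGraph (Fin k)) (i j : Fin k) (b : Bool)
    (s s' : Fin k → Bool) : Prop :=
  ValidState G s ∧ ValidState G s' ∧ (∀ l : Fin k, l ≠ j → s l = s' l) ∧
    s i = b ∧ s' i = b ∧ s j = false ∧ s' j = true

/-- `(i,j,b)` is a dichotomy: there exist valid states `s, s'` with `s j = 0`, `s' j = 1`
and `s i = s' i = b`. -/
def IsDichotomy {k : ℕ} (G : SimpleGraph (Fin k)) (i j : Fin k) (b : Bool) : Prop :=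
  ∃ s s' : Fin k → Bool, ValidState G s ∧ ValidState G s' ∧
    s j = false ∧ s' j = true ∧ s i = b ∧ s' i = b

/-- A cover `K` of `C` (for correlation sets of size at most 2): a set of valid states
containing an `(i,j,b)`-pair for every correlation set `{i,j} ∈ C` and valid dichotomy
`(i,j,b)`, and for every singleton `{i} ∈ C` two states differing exactly in coordinate `i`. -/
def IsCover {k n : ℕ} (G : SimpleGraph (Fin k)) (Cset : Fin n → Finset (Fin k))
    (K : Set (Fin k → Bool)) : Prop :=
  (∀ s ∈ K, ValidState G s) ∧
  (∀ i j : Fin k, i ≠ j → (∃ l : Fin n, Cset l = {i, j}) → ∀ b : Bool,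
    IsDichotomy G i j b → ∃ s s', s ∈ K ∧ s' ∈ K ∧ IsPair G i j b s s') ∧
  (∀ i : Fin k, (∃ l : Fin n, Cset l = {i}) →
    ∃ s s', s ∈ K ∧ s' ∈ K ∧ ValidState G s ∧ ValidState G s' ∧
      s i = false ∧ s' i = true ∧ ∀ l : Fin k, l ≠ i → s l = s' l)

/-- with correlation sets of size at most 2 and `K` a cover of `C`, fixing
`i` and `b`, if `X j = μ_i^{s₂} − μ_i^{s₁}` for any `(i,j,b)`-pair `(s₁,s₂)` when
`{i,j} ∈ C`, and `X j = 0` when `{i,j} ∉ C`, then for every valid state `s` with `s i = b`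
and every `s'' ∈ K` with `s'' i = b`,
`μ_i^s = μ_i^{s''} + ∑_j X j · [1(s j = 1)·1(s'' j = 0) − 1(s j = 0)·1(s'' j = 1)]`. -/
theorem stmt_0 {k n : ℕ} (G : SimpleGraph (Fin k))
    (Cset : Fin n → Finset (Fin k)) (hsize : ∀ l, (Cset l).card ≤ 2)
    (θ : Fin n → (Fin k → Bool) → ℝ) (hθ : ParamAssignment G Cset θ)
    (K : Set (Fin k → Bool)) (hK : IsCover G Cset K)
    (i : Fin k) (b : Bool) (X : Fin k → ℝ)
    (hX : ∀ (j : Fin k) (s₁ s₂ : Fin k → Bool), (∃ l : Fin n, Cset l = {i, j}) →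
      IsPair G i j b s₁ s₂ → X j = meanLoss Cset θ i s₂ - meanLoss Cset θ i s₁)
    (hX0 : ∀ j : Fin k, (¬ ∃ l : Fin n, Cset l = {i, j}) → X j = 0)
    (s : Fin k → Bool) (hs : ValidState G s) (hsi : s i = b)
    (s'' : Fin k → Bool) (hs''K : s'' ∈ K) (hs''i : s'' i = b) :
    meanLoss Cset θ i s = meanLoss Cset θ i s'' +
      ∑ j : Fin k, X j *
        ((if s j = true ∧ s'' j = false then (1 : ℝ) else 0) -
         (if s j = false ∧ s'' j = true then (1 : ℝ) else 0)) := by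
  have hs''v : ValidState G s'' := hK.1 s'' hs''K
  -- difference of mean losses between states of an (i,j,b)-pair, expressed via
  -- arbitrary states t₀, t₁ with the same i, j coordinates
  have pair_diff : ∀ (j : Fin k), i ≠ j → ∀ p₁ p₂ : Fin k → Bool, IsPair G i j b p₁ p₂ →
      ∀ t₀ t₁ : Fin k → Bool, ValidState G t₀ → ValidState G t₁ → t₀ i = b → t₁ i = b →
      t₀ j = false → t₁ j = true →
      meanLoss Cset θ i p₂ - meanLoss Cset θ i p₁ =
        ∑ l : Fin n, if Cset l = {i, j} then θ l t₁ - θ l t₀ else 0 := by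
    intro j hij p₁ p₂ hp t₀ t₁ ht₀v ht₁v ht₀i ht₁i ht₀j ht₁j
    obtain ⟨hp₁v, hp₂v, hagree, hp₁i, hp₂i, hp₁j, hp₂j⟩ := hp
    unfold meanLoss
    rw [← Finset.sum_sub_distrib]
    apply Finset.sum_congr rfl
    intro l _
    by_cases hi : i ∈ Cset l
    · by_cases hj : j ∈ Cset l
      · have heq : Cset l = {i, j} := by
          refine (Finset.eq_of_subset_of_card_le ?_ ?_).symm
          · intro x hx
            simp only [Finset.mem_insert, Finset.mem_singleton] at hx
            rcases hx with rfl | rfl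
            · exact hi
            · exact hj
          · calc (Cset l).card ≤ 2 := hsize l
              _ = ({i, j} : Finset (Fin k)).card := (Finset.card_pair hij).symm
        simp only [if_pos hi, if_pos heq]
        have h2 : θ l p₂ = θ l t₁ := by
          apply hθ.2 l p₂ t₁ hp₂v ht₁v
          intro x hx
          rw [heq] at hx
          simp only [Finset.mem_insert, Finset.mem_singleton] at hx
          rcases hx with rfl | rfl
          · rw [hp₂i, ht₁i]
          · rw [hp₂j, ht₁j]
        have h1 : θ l p₁ = θ l t₀ := by
          apply hθ.2 l p₁ t₀ hp₁v ht₀v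
          intro x hx
          rw [heq] at hx
          simp only [Finset.mem_insert, Finset.mem_singleton] at hx
          rcases hx with rfl | rfl
          · rw [hp₁i, ht₀i]
          · rw [hp₁j, ht₀j]
        rw [h1, h2]
      · have hne : Cset l ≠ {i, j} := fun h => hj (by rw [h]; simp)
        simp only [if_pos hi, if_neg hne]
        have : θ l p₂ = θ l p₁ := by
          apply hθ.2 l p₂ p₁ hp₂v hp₁v
          intro x hx
          exact (hagree x (fun hxj => hj (hxj ▸ hx))).symm
        rw [this, sub_self]
    · have hne : Cset l ≠ {i, j} := fun h => hi (by rw [h]; simp)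
      simp only [if_neg hi, if_neg hne, sub_self]
  -- the key per-coordinate identity
  have key : ∀ j : Fin k, X j *
      ((if s j = true ∧ s'' j = false then (1 : ℝ) else 0) -
       (if s j = false ∧ s'' j = true then (1 : ℝ) else 0)) =
      ∑ l : Fin n, if Cset l = {i, j} then θ l s - θ l s'' else 0 := by
    intro j
    by_cases hsj : s j = s'' j
    · have hfac : ((if s j = true ∧ s'' j = false then (1 : ℝ) else 0) -
          (if s j = false ∧ s'' j = true then (1 : ℝ) else 0)) = 0 := by
        cases h1 : s j <;> cases h2 : s'' j <;> simp_all
      rw [hfac, mul_zero]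
      symm
      apply Finset.sum_eq_zero
      intro l _
      by_cases heq : Cset l = {i, j}
      · rw [if_pos heq]
        have : θ l s = θ l s'' := by
          apply hθ.2 l s s'' hs hs''v
          intro x hx
          rw [heq] at hx
          simp only [Finset.mem_insert, Finset.mem_singleton] at hx
          rcases hx with rfl | rfl
          · rw [hsi, hs''i]
          · exact hsj
        rw [this, sub_self]
      · rw [if_neg heq]
    · have hij : i ≠ j := by
        intro h
        exact hsj (by rw [← h, hsi, hs''i])
      by_cases hC : ∃ l : Fin n, Cset l = {i, j}
      · cases h1 : s j <;> cases h2 : s'' j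
        · exact absurd (h1.trans h2.symm) hsj
        · -- s j = false, s'' j = true
          have hdich : IsDichotomy G i j b := ⟨s, s'', hs, hs''v, h1, h2, hsi, hs''i⟩
          obtain ⟨p₁, p₂, _, _, hp⟩ := hK.2.1 i j hij hC b hdich
          have hXj : X j = meanLoss Cset θ i p₂ - meanLoss Cset θ i p₁ := hX j p₁ p₂ hC hp
          have hd := pair_diff j hij p₁ p₂ hp s s'' hs hs''v hsi hs''i h1 h2
          have hXj' : X j = ∑ l : Fin n, if Cset l = {i, j} then θ l s'' - θ l s else 0 :=
            hXj.trans hd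
          have hfac : ((if (false : Bool) = true ∧ (true : Bool) = false then (1 : ℝ) else 0) -
              (if (false : Bool) = false ∧ (true : Bool) = true then (1 : ℝ) else 0)) = -1 := by
            norm_num
          rw [hfac, hXj']
          rw [mul_neg_one, ← Finset.sum_neg_distrib]
          apply Finset.sum_congr rfl
          intro l _
          split_ifs <;> ring
        · -- s j = true, s'' j = false
          have hdich : IsDichotomy G i j b := ⟨s'', s, hs''v, hs, h2, h1, hs''i, hsi⟩
          obtain ⟨p₁, p₂, _, _, hp⟩ := hK.2.1 i j hij hC b hdich
          have hXj : X j = meanLoss Cset θ i p₂ - meanLoss Cset θ i p₁ := hX j p₁ p₂ hC hp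
          have hd := pair_diff j hij p₁ p₂ hp s'' s hs''v hs hs''i hsi h2 h1
          have hfac : ((if (true : Bool) = true ∧ (false : Bool) = false then (1 : ℝ) else 0) -
              (if (true : Bool) = false ∧ (false : Bool) = true then (1 : ℝ) else 0)) = 1 := by
            norm_num
          rw [hfac, mul_one, hXj, hd]
        · exact absurd (h1.trans h2.symm) hsj
      · rw [hX0 j hC, zero_mul]
        symm
        apply Finset.sum_eq_zero
        intro l _
        rw [if_neg (fun h => hC ⟨l, h⟩)]
  -- sum over the unique second coordinate of each correlation set containing i
  have inner : ∀ l : Fin n,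
      (∑ j : Fin k, if Cset l = {i, j} then θ l s - θ l s'' else 0) =
      if i ∈ Cset l then θ l s - θ l s'' else 0 := by
    intro l
    by_cases hi : i ∈ Cset l
    · obtain ⟨j₀, hj₀⟩ : ∃ j₀, Cset l = {i, j₀} := by
        have hcard : (Cset l).card ≤ 2 := hsize l
        have hpos : 0 < (Cset l).card := Finset.card_pos.mpr ⟨i, hi⟩
        rcases Nat.lt_or_ge (Cset l).card 2 with h | h
        · have h1 : (Cset l).card = 1 := by omega
          obtain ⟨a, ha⟩ := Finset.card_eq_one.mp h1
          have hia : i = a := by rw [ha] at hi; simpa using hi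
          refine ⟨i, ?_⟩
          rw [ha, ← hia]
          simp
        · have h2 : (Cset l).card = 2 := le_antisymm hcard h
          obtain ⟨a, c, hac, habc⟩ := Finset.card_eq_two.mp h2
          rw [habc] at hi
          simp only [Finset.mem_insert, Finset.mem_singleton] at hi
          rcases hi with rfl | rfl
          · exact ⟨c, habc⟩
          · exact ⟨a, by rw [habc, Finset.pair_comm]⟩
      have huniq : ∀ j : Fin k, Cset l = {i, j} ↔ j = j₀ := by
        intro j
        constructor
        · intro h
          have hpair : ({i, j₀} : Finset (Fin k)) = {i, j} := hj₀.symm.trans h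
          have hj₀m : j₀ ∈ ({i, j} : Finset (Fin k)) := by
            rw [← hpair]; simp
          have hjm : j ∈ ({i, j₀} : Finset (Fin k)) := by
            rw [hpair]; simp
          simp only [Finset.mem_insert, Finset.mem_singleton] at hj₀m hjm
          rcases hjm with h1 | h1
          · rcases hj₀m with h2 | h2
            · exact h1.trans h2.symm
            · exact h2.symm
          · exact h1
        · rintro rfl; exact hj₀
      simp only [huniq]
      rw [Finset.sum_ite_eq' Finset.univ j₀ (fun _ => θ l s - θ l s'')]
      simp [hi]
    · rw [if_neg hi]
      apply Finset.sum_eq_zero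
      intro j _
      exact if_neg (fun h => hi (by rw [h]; simp))
  have hmain : (∑ j : Fin k, X j *
      ((if s j = true ∧ s'' j = false then (1 : ℝ) else 0) -
       (if s j = false ∧ s'' j = true then (1 : ℝ) else 0))) =
      meanLoss Cset θ i s - meanLoss Cset θ i s'' := by
    calc (∑ j : Fin k, X j *
        ((if s j = true ∧ s'' j = false then (1 : ℝ) else 0) -
         (if s j = false ∧ s'' j = true then (1 : ℝ) else 0)))
        = ∑ j : Fin k, ∑ l : Fin n, if Cset l = {i, j} then θ l s - θ l s'' else 0 :=
          Finset.sum_congr rfl (fun j _ => key j)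
      _ = ∑ l : Fin n, ∑ j : Fin k, if Cset l = {i, j} then θ l s - θ l s'' else 0 :=
          Finset.sum_comm
      _ = ∑ l : Fin n, if i ∈ Cset l then θ l s - θ l s'' else 0 :=
          Finset.sum_congr rfl (fun l _ => inner l)
      _ = meanLoss Cset θ i s - meanLoss Cset θ i s'' := by
          unfold meanLoss
          rw [← Finset.sum_sub_distrib]
          apply Finset.sum_congr rfl
          intro l _
          split_ifs <;> simp
  linarith [hmain]
end

section
/- Let the correlation sets all have size at most 2, fix i,j ∈ {1,...,k} and b ∈ {0,1}, and suppose (s,s') and (t,t') are both (i,j,b)-pairs (so s(j)=t(j)=0, s'(j)=t'(j)=1, and each pair agrees on all coordinates other than j with the i-th coordinate equal to b). Then μ_i^{s'} − μ_i^s = μ_i^{t'} − μ_i^t; that is, the difference depends only on (i,j,b) and not on the chosen pair. Moreover, if {i,j} ∉ C then this difference is 0. -/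
open scoped BigOperators

/-- with correlation sets of size at most 2, if `(s,s')` and `(t,t')` are both
`(i,j,b)`-pairs, then `μ_i^{s'} − μ_i^s = μ_i^{t'} − μ_i^t`: the difference depends only on
`(i,j,b)` and not on the chosen pair.  Moreover, if `{i,j} ∉ C` then this difference is `0`. -/
theorem stmt_1 {k n : ℕ} (G : SimpleGraph (Fin k))
    (Cset : Fin n → Finset (Fin k)) (hsize : ∀ l, (Cset l).card ≤ 2)
    (θ : Fin n → (Fin k → Bool) → ℝ) (hθ : ParamAssignment G Cset θ)
    (i j : Fin k) (b : Bool) (s s' t t' : Fin k → Bool)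
    (hss' : IsPair G i j b s s') (htt' : IsPair G i j b t t') :
    meanLoss Cset θ i s' - meanLoss Cset θ i s =
      meanLoss Cset θ i t' - meanLoss Cset θ i t ∧
    ((¬ ∃ l : Fin n, Cset l = {i, j}) →
      meanLoss Cset θ i s' - meanLoss Cset θ i s = 0) := by
  obtain ⟨hvs, hvs', hagree, hsi, hs'i, hsj, hs'j⟩ := hss'
  obtain ⟨hvt, hvt', htagree, hti, ht'i, htj, ht'j⟩ := htt'
  have hij : i ≠ j := by
    intro h; subst h; rw [hsj] at hsi; rw [hs'j] at hs'i; rw [← hsi] at hs'i; simp at hs'i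
  have key : ∀ (u u' : Fin k → Bool), ValidState G u → ValidState G u' →
      (∀ l : Fin k, l ≠ j → u l = u' l) → ∀ l : Fin n,
      (if i ∈ Cset l then θ l u' else 0) - (if i ∈ Cset l then θ l u else 0) =
        if Cset l = {i, j} then θ l u' - θ l u else 0 := by
    intro u u' hvu hvu' hag l
    by_cases hi : i ∈ Cset l
    · by_cases hj : j ∈ Cset l
      · have hsub : ({i, j} : Finset (Fin k)) ⊆ Cset l := by
          intro x hx; simp at hx; rcases hx with h | h <;> subst h <;> assumption
        have heq : Cset l = {i, j} := by
          refine (Finset.eq_of_subset_of_card_le hsub ?_).symm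
          rw [Finset.card_insert_of_notMem (by simpa using hij), Finset.card_singleton]
          exact hsize l
        simp [hi, heq]
      · have : θ l u = θ l u' := by
          refine hθ.2 l u u' hvu hvu' (fun x hx => hag x ?_)
          rintro rfl; exact hj hx
        have hne : Cset l ≠ {i, j} := by
          intro h; apply hj; rw [h]; simp
        simp [hi, hne, this]
    · have hne : Cset l ≠ {i, j} := by
        intro h; apply hi; rw [h]; simp
      simp [hi, hne]
  have eq0 : ∀ l : Fin n, Cset l = {i, j} → θ l s = θ l t := by
    intro l hl
    refine hθ.2 l s t hvs hvt ?_
    intro x hx; rw [hl] at hx; simp at hx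
    rcases hx with h | h <;> subst h
    · rw [hsi, hti]
    · rw [hsj, htj]
  have eq1 : ∀ l : Fin n, Cset l = {i, j} → θ l s' = θ l t' := by
    intro l hl
    refine hθ.2 l s' t' hvs' hvt' ?_
    intro x hx; rw [hl] at hx; simp at hx
    rcases hx with h | h <;> subst h
    · rw [hs'i, ht'i]
    · rw [hs'j, ht'j]
  have hsum : ∀ (u u' : Fin k → Bool), ValidState G u → ValidState G u' →
      (∀ l : Fin k, l ≠ j → u l = u' l) →
      meanLoss Cset θ i u' - meanLoss Cset θ i u =
        ∑ l : Fin n, if Cset l = {i, j} then θ l u' - θ l u else 0 := by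
    intro u u' hvu hvu' hag
    rw [meanLoss, meanLoss, ← Finset.sum_sub_distrib]
    exact Finset.sum_congr rfl fun l _ => key u u' hvu hvu' hag l
  constructor
  · rw [hsum s s' hvs hvs' hagree, hsum t t' hvt hvt' htagree]
    refine Finset.sum_congr rfl fun l _ => ?_
    by_cases hl : Cset l = {i, j}
    · simp [hl, eq0 l hl, eq1 l hl]
    · simp [hl]
  · intro hno
    rw [hsum s s' hvs hvs' hagree]
    refine Finset.sum_eq_zero fun l _ => ?_
    have : Cset l ≠ {i, j} := fun h => hno ⟨l, h⟩
    simp [this]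
end

section
/- If all correlation sets in C have size at most 2, then there exists a cover K of C with |K| ≤ 4n, where n = |C|: namely, one can take, for each {i,j} ∈ C, the at most four valid states whose coordinates are zero outside {i,j}, and for each singleton {i} ∈ C the all-zeros state and the indicator state of i. -/
open scoped BigOperators

/-- if all correlation sets have size at most 2, then there exists a cover `K`
of `C` with `|K| ≤ 4n`, where `n = |C|`. -/
theorem stmt_2 {k n : ℕ} (G : SimpleGraph (Fin k))
    (Cset : Fin n → Finset (Fin k)) (hsize : ∀ l, (Cset l).card ≤ 2) :
    ∃ K : Finset (Fin k → Bool), IsCover G Cset (↑K : Set (Fin k → Bool)) ∧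
      K.card ≤ 4 * n := by
  classical
  -- For each correlation set, the (at most 4) valid states supported in it.
  set F : Fin n → Finset (Fin k → Bool) := fun l =>
    ((Cset l).powerset.image (fun T m => decide (m ∈ T))).filter (ValidState G) with hF
  refine ⟨Finset.univ.biUnion F, ?_, ?_⟩
  · have memK : ∀ (l : Fin n) (s : Fin k → Bool), ValidState G s →
        (∀ m, s m = true → m ∈ Cset l) → s ∈ Finset.univ.biUnion F := by
      intro l s hv hsupp
      refine Finset.mem_biUnion.2 ⟨l, Finset.mem_univ _, ?_⟩
      rw [hF]
      refine Finset.mem_filter.2 ⟨Finset.mem_image.2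
        ⟨Finset.univ.filter (fun m => s m = true), ?_, ?_⟩, hv⟩
      · exact Finset.mem_powerset.2 (fun m hm => hsupp m (Finset.mem_filter.1 hm).2)
      · funext m
        by_cases h : s m = true <;> simp [h]
    refine ⟨?_, ?_, ?_⟩
    · intro s hs
      rcases Finset.mem_biUnion.1 hs with ⟨l, -, hl⟩
      exact (Finset.mem_filter.1 hl).2
    · rintro i j hij ⟨l, hl⟩ b ⟨s0, s1, hs0, hs1, h0j, h1j, h0i, h1i⟩
      set s : Fin k → Bool := fun m => if m = i then b else false with hsdef
      set s' : Fin k → Bool := fun m => if m = j then true else if m = i then b else false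
        with hs'def
      have hnadj : b = true → ¬ G.Adj i j := fun hb => hs1 i j (hb ▸ h1i) h1j
      have hvs : ValidState G s := by
        intro a c ha hc
        simp only [hsdef] at ha hc
        split_ifs at ha hc with h1 h2
        · subst h1; subst h2; exact G.loopless.irrefl _
        all_goals simp_all
      have hvs' : ValidState G s' := by
        intro a c ha hc
        simp only [hs'def] at ha hc
        split_ifs at ha hc with h1 h2 h3 h4 h5 h6
        all_goals first
          | (subst_vars; exact G.loopless.irrefl _)
          | (subst_vars; exact fun h => hnadj ha (G.adj_symm h))
          | (subst_vars; exact fun h => hnadj hc h)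
          | simp_all
      have hsK : s ∈ Finset.univ.biUnion F := by
        refine memK l s hvs ?_
        intro m hm
        simp only [hsdef] at hm
        split_ifs at hm with h
        · subst h; rw [hl]; simp
      have hs'K : s' ∈ Finset.univ.biUnion F := by
        refine memK l s' hvs' ?_
        intro m hm
        simp only [hs'def] at hm
        split_ifs at hm with h1 h2
        · subst h1; rw [hl]; simp
        · subst h2; rw [hl]; simp
      refine ⟨s, s', hsK, hs'K, hvs, hvs', ?_, ?_, ?_, ?_, ?_⟩
      · intro m hm; simp [hsdef, hs'def, hm]
      · simp [hsdef]
      · simp [hs'def, hij]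
      · simp [hsdef, Ne.symm hij]
      · simp [hs'def]
    · rintro i ⟨l, hl⟩
      set s : Fin k → Bool := fun _ => false with hsdef
      set s' : Fin k → Bool := fun m => if m = i then true else false with hs'def
      have hvs : ValidState G s := by intro a c ha; simp [hsdef] at ha
      have hvs' : ValidState G s' := by
        intro a c ha hc
        simp only [hs'def] at ha hc
        split_ifs at ha hc with h1 h2
        · subst h1; subst h2; exact G.loopless.irrefl _
        all_goals simp_all
      have hsK : s ∈ Finset.univ.biUnion F := memK l s hvs (by simp [hsdef])
      have hs'K : s' ∈ Finset.univ.biUnion F := by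
        refine memK l s' hvs' ?_
        intro m hm
        simp only [hs'def] at hm
        split_ifs at hm with h
        · subst h; rw [hl]; simp
      exact ⟨s, s', hsK, hs'K, hvs, hvs', by simp [hsdef], by simp [hs'def],
        fun m hm => by simp [hsdef, hs'def, hm]⟩
  · calc (Finset.univ.biUnion F).card ≤ ∑ l : Fin n, (F l).card :=
          Finset.card_biUnion_le
      _ ≤ ∑ _l : Fin n, 4 := by
          refine Finset.sum_le_sum fun l _ => ?_
          calc (F l).card ≤ ((Cset l).powerset.image (fun T m => decide (m ∈ T))).card :=
                Finset.card_filter_le _ _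
            _ ≤ (Cset l).powerset.card := Finset.card_image_le
            _ = 2 ^ (Cset l).card := Finset.card_powerset _
            _ ≤ 2 ^ 2 := Nat.pow_le_pow_right (by norm_num) (hsize l)
            _ = 4 := by norm_num
      _ = 4 * n := by simp [mul_comm]
end

section
/- Let K be a general cover for C. Fix i ∈ {1,...,k} and b ∈ {0,1}, and for each J ∈ I_i and each pair of configurations (u₁,u₂) such that (i,b,J,u₁,u₂) is a dichotomy, define X^{i,u₁,u₂}_{b,J} = μ_i^{s₁} − μ_i^{s₂} where (s₁,s₂) is any (i,b,J,u₁,u₂)-pair in K; set X^{i,u,u}_{b,J} = 0. Then for every state s ∈ S with s(i) = b and every state s'' ∈ K with s''(i) = b, one has μ_i^s = μ_i^{s''} + Σ_{J ∈ I_i} X^{i, s(J), s''(J)}_{b,J}, where s(J) denotes s restricted to the coordinates in J. -/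
open scoped BigOperators

/-- `a` and `b` share a correlation set if some `C_l ∈ C` contains both. -/
def SharesSet {k n : ℕ} (Cset : Fin n → Finset (Fin k)) (a b : Fin k) : Prop :=
  ∃ l : Fin n, a ∈ Cset l ∧ b ∈ Cset l

/-- `Ii` is a partition of `{j ≠ i : j shares a correlation set with i}` into subsets such
that no two vertices lying in different subsets share a correlation set. -/
def IsPartitionFor {k n : ℕ} (Cset : Fin n → Finset (Fin k)) (i : Fin k)
    (Ii : Finset (Finset (Fin k))) : Prop :=
  (∀ J ∈ Ii, ∀ j ∈ J, j ≠ i ∧ SharesSet Cset i j) ∧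
  (∀ j : Fin k, j ≠ i → SharesSet Cset i j → ∃ J ∈ Ii, j ∈ J) ∧
  (∀ J ∈ Ii, ∀ J' ∈ Ii, J ≠ J' → Disjoint J J') ∧
  (∀ J ∈ Ii, ∀ J' ∈ Ii, J ≠ J' → ∀ a ∈ J, ∀ b ∈ J', ¬ SharesSet Cset a b)

/-- An `(i,b,J,u₁,u₂)`-pair: valid states `(s, s')` with `s` restricted to `J` equal to `u₁`,
`s'` restricted to `J` equal to `u₂`, `s i = s' i = b`, agreeing on all coordinates
outside `J`. -/
def IsGenPair {k : ℕ} (G : SimpleGraph (Fin k)) (i : Fin k) (b : Bool)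
    (J : Finset (Fin k)) (u₁ u₂ : Fin k → Bool) (s s' : Fin k → Bool) : Prop :=
  ValidState G s ∧ ValidState G s' ∧
    (∀ j ∈ J, s j = u₁ j) ∧ (∀ j ∈ J, s' j = u₂ j) ∧
    s i = b ∧ s' i = b ∧ (∀ l : Fin k, l ∉ J → s l = s' l)

/-- A general cover `K` of `C` relative to the partitions `I i`: a set of valid states
containing an `(i,b,J,u₁,u₂)`-pair for every valid dichotomy `(i,b,J,u₁,u₂)`. -/
def IsGenCover {k n : ℕ} (G : SimpleGraph (Fin k)) (Cset : Fin n → Finset (Fin k))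
    (I : Fin k → Finset (Finset (Fin k))) (K : Set (Fin k → Bool)) : Prop :=
  (∀ s ∈ K, ValidState G s) ∧
  (∀ (i : Fin k) (b : Bool) (J : Finset (Fin k)), J ∈ I i →
    ∀ u₁ u₂ : Fin k → Bool,
      (∃ s s' : Fin k → Bool, IsGenPair G i b J u₁ u₂ s s') →
      ∃ s s', s ∈ K ∧ s' ∈ K ∧ IsGenPair G i b J u₁ u₂ s s')

/-- let `K` be a general cover of `C`.  Fix `i` and `b`, and let
`X J u₁ u₂ = μ_i^{s₁} − μ_i^{s₂}` for any `(i,b,J,u₁,u₂)`-pair `(s₁,s₂)` in `K`,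
with `X J u u = 0`.  Then for every valid state `s` with `s i = b` and every `s'' ∈ K`
with `s'' i = b`, `μ_i^s = μ_i^{s''} + ∑_{J ∈ I_i} X J (s|J) (s''|J)`. -/
theorem stmt_7 {k n : ℕ} (G : SimpleGraph (Fin k)) (m : ℕ)
    (Cset : Fin n → Finset (Fin k)) (hsize : ∀ l, (Cset l).card ≤ m)
    (θ : Fin n → (Fin k → Bool) → ℝ) (hθ : ParamAssignment G Cset θ)
    (I : Fin k → Finset (Finset (Fin k))) (hI : ∀ i, IsPartitionFor Cset i (I i))
    (K : Set (Fin k → Bool)) (hK : IsGenCover G Cset I K)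
    (i : Fin k) (b : Bool)
    (X : Finset (Fin k) → (Fin k → Bool) → (Fin k → Bool) → ℝ)
    (hX : ∀ J ∈ I i, ∀ (u₁ u₂ s₁ s₂ : Fin k → Bool), s₁ ∈ K → s₂ ∈ K →
      IsGenPair G i b J u₁ u₂ s₁ s₂ →
      X J u₁ u₂ = meanLoss Cset θ i s₁ - meanLoss Cset θ i s₂)
    (hXdiag : ∀ (J : Finset (Fin k)) (u₁ u₂ : Fin k → Bool),
      (∀ j ∈ J, u₁ j = u₂ j) → X J u₁ u₂ = 0)
    (s : Fin k → Bool) (hs : ValidState G s) (hsi : s i = b)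
    (s'' : Fin k → Bool) (hs''K : s'' ∈ K) (hs''i : s'' i = b) :
    meanLoss Cset θ i s = meanLoss Cset θ i s'' + ∑ J ∈ I i, X J s s'' := by
  classical
  obtain ⟨hKvalid, hKcover⟩ := hK
  obtain ⟨hpos, hagree⟩ := hθ
  obtain ⟨hI1, hI2, hI3, hI4⟩ := hI i
  have hs''v : ValidState G s'' := hKvalid s'' hs''K
  have hiJ : ∀ J ∈ I i, i ∉ J := fun J hJ h => (hI1 J hJ i h).1 rfl
  have hX' : ∀ J ∈ I i, X J s s'' =
      ∑ j : Fin n, (if i ∈ Cset j ∧ ¬ Disjoint (Cset j) J then θ j s - θ j s'' else 0) := by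
    intro J hJ
    have hiJ' := hiJ J hJ
    have hle : ∀ (w : Fin k → Bool), w i = b → ∀ l,
        (if l ∈ J then w l else if l = i then b else false) = true → w l = true := by
      intro w hw l h
      by_cases hlJ : l ∈ J
      · simpa [hlJ] using h
      · by_cases hli : l = i
        · subst hli; rw [hw]; simpa [hlJ] using h
        · simp [hlJ, hli] at h
    obtain ⟨t₁, t₂, ht₁K, ht₂K, hgp⟩ := hKcover i b J hJ s s''
      ⟨fun l => if l ∈ J then s l else if l = i then b else false,
       fun l => if l ∈ J then s'' l else if l = i then b else false,
       fun p q hp hq => hs p q (hle s hsi p hp) (hle s hsi q hq),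
       fun p q hp hq => hs''v p q (hle s'' hs''i p hp) (hle s'' hs''i q hq),
       fun j hj => by simp [hj],
       fun j hj => by simp [hj],
       by simp [hiJ'],
       by simp [hiJ'],
       fun l hl => by simp [hl]⟩
    obtain ⟨ht₁v, ht₂v, ht₁J, ht₂J, ht₁i, ht₂i, hout⟩ := hgp
    rw [hX J hJ s s'' t₁ t₂ ht₁K ht₂K ⟨ht₁v, ht₂v, ht₁J, ht₂J, ht₁i, ht₂i, hout⟩]
    unfold meanLoss
    rw [← Finset.sum_sub_distrib]
    apply Finset.sum_congr rfl
    intro j _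
    by_cases hij : i ∈ Cset j
    · by_cases hd : Disjoint (Cset j) J
      · rw [if_pos hij, if_pos hij,
          if_neg (show ¬(i ∈ Cset j ∧ ¬ Disjoint (Cset j) J) from fun h => h.2 hd)]
        have heq : θ j t₁ = θ j t₂ := hagree j t₁ t₂ ht₁v ht₂v
          (fun l hl => hout l (Finset.disjoint_left.mp hd hl))
        rw [heq]; ring
      · rw [if_pos hij, if_pos hij,
          if_pos (show i ∈ Cset j ∧ ¬ Disjoint (Cset j) J from ⟨hij, hd⟩)]
        obtain ⟨a, haC, haJ⟩ := Finset.not_disjoint_iff.mp hd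
        have hCsub : ∀ l ∈ Cset j, l ∉ J → l = i := by
          intro l hlC hlJ
          by_contra hli
          obtain ⟨J', hJ', hlJ'⟩ := hI2 l hli ⟨j, hij, hlC⟩
          have hJJ' : J' ≠ J := fun h => hlJ (h ▸ hlJ')
          exact hI4 J' hJ' J hJ hJJ' l hlJ' a haJ ⟨j, hlC, haC⟩
        have h1 : θ j t₁ = θ j s := hagree j t₁ s ht₁v hs (by
          intro l hl
          by_cases hlJ : l ∈ J
          · exact ht₁J l hlJ
          · rw [hCsub l hl hlJ, ht₁i, hsi])
        have h2 : θ j t₂ = θ j s'' := hagree j t₂ s'' ht₂v hs''v (by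
          intro l hl
          by_cases hlJ : l ∈ J
          · exact ht₂J l hlJ
          · rw [hCsub l hl hlJ, ht₂i, hs''i])
        rw [h1, h2]
    · rw [if_neg hij, if_neg hij,
        if_neg (show ¬(i ∈ Cset j ∧ ¬ Disjoint (Cset j) J) from fun h => hij h.1)]
      ring
  rw [Finset.sum_congr rfl hX', Finset.sum_comm]
  have hinner : ∀ j : Fin n,
      ∑ J ∈ I i, (if i ∈ Cset j ∧ ¬ Disjoint (Cset j) J then θ j s - θ j s'' else 0)
      = (if i ∈ Cset j then θ j s else 0) - (if i ∈ Cset j then θ j s'' else 0) := by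
    intro j
    by_cases hij : i ∈ Cset j
    · rw [if_pos hij, if_pos hij]
      by_cases hone : ∃ a ∈ Cset j, a ≠ i
      · obtain ⟨a, haC, hai⟩ := hone
        obtain ⟨J₀, hJ₀, haJ₀⟩ := hI2 a hai ⟨j, hij, haC⟩
        rw [Finset.sum_eq_single_of_mem J₀ hJ₀]
        · rw [if_pos ⟨hij, Finset.not_disjoint_iff.mpr ⟨a, haC, haJ₀⟩⟩]
        · intro J hJ hne
          rw [if_neg]
          rintro ⟨-, hd⟩
          obtain ⟨c, hcC, hcJ⟩ := Finset.not_disjoint_iff.mp hd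
          exact hI4 J hJ J₀ hJ₀ hne c hcJ a haJ₀ ⟨j, hcC, haC⟩
      · push_neg at hone
        have hz : θ j s = θ j s'' := hagree j s s'' hs hs''v (by
          intro l hl; rw [hone l hl, hsi, hs''i])
        rw [hz]; simp
    · simp [hij]
  rw [Finset.sum_congr rfl (fun j _ => hinner j)]
  unfold meanLoss
  rw [Finset.sum_sub_distrib]
  ring
end

section
/- Fix i ∈ {1,...,k}, b ∈ {0,1}, J ∈ I_i and configurations u₁,u₂ ∈ {0,1}^J such that (i,b,J,u₁,u₂) is a dichotomy. If (s,s') and (t,t') are both (i,b,J,u₁,u₂)-pairs, then μ_i^{s} − μ_i^{s'} = μ_i^{t} − μ_i^{t'}; that is, the difference of mean losses of criterion i across such a pair depends only on (i,b,J,u₁,u₂) and not on the chosen pair of states. -/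
open scoped BigOperators

/-- fix `i`, `b`, `J ∈ I_i` and configurations `u₁, u₂` such that
`(i,b,J,u₁,u₂)` is a dichotomy.  If `(s,s')` and `(t,t')` are both `(i,b,J,u₁,u₂)`-pairs,
then `μ_i^s − μ_i^{s'} = μ_i^t − μ_i^{t'}`: the difference depends only on
`(i,b,J,u₁,u₂)` and not on the chosen pair of states. -/
theorem stmt_8 {k n : ℕ} (G : SimpleGraph (Fin k)) (m : ℕ)
    (Cset : Fin n → Finset (Fin k)) (hsize : ∀ l, (Cset l).card ≤ m)
    (θ : Fin n → (Fin k → Bool) → ℝ) (hθ : ParamAssignment G Cset θ)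
    (i : Fin k) (b : Bool) (Ii : Finset (Finset (Fin k)))
    (hIi : IsPartitionFor Cset i Ii)
    (J : Finset (Fin k)) (hJ : J ∈ Ii) (u₁ u₂ : Fin k → Bool)
    (s s' t t' : Fin k → Bool)
    (hss' : IsGenPair G i b J u₁ u₂ s s')
    (htt' : IsGenPair G i b J u₁ u₂ t t') :
    meanLoss Cset θ i s - meanLoss Cset θ i s' =
      meanLoss Cset θ i t - meanLoss Cset θ i t' := by

  obtain ⟨hvs, hvs', hsu1, hs'u2, hsi, hs'i, hout⟩ := hss'
  obtain ⟨hvt, hvt', htu1, ht'u2, hti, ht'i, htout⟩ := htt'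
  unfold meanLoss
  rw [← Finset.sum_sub_distrib, ← Finset.sum_sub_distrib]
  apply Finset.sum_congr rfl
  intro j _
  by_cases hij : i ∈ Cset j
  · simp only [hij, if_true]
    by_cases hmeet : ∃ a ∈ Cset j, a ∈ J
    · -- Cset j ⊆ J ∪ {i}; θ j s = θ j t and θ j s' = θ j t'
      obtain ⟨a, haC, haJ⟩ := hmeet
      have hsub : ∀ l ∈ Cset j, l ≠ i → l ∈ J := by
        intro l hlC hli
        obtain ⟨J'', hJ'', hlJ''⟩ := hIi.2.1 l hli ⟨j, hij, hlC⟩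
        by_cases hJJ : J'' = J
        · exact hJJ ▸ hlJ''
        · exact absurd ⟨j, haC, hlC⟩
            (hIi.2.2.2 J hJ J'' hJ'' (Ne.symm hJJ) a haJ l hlJ'')
      have h1 : θ j s = θ j t := by
        apply hθ.2 j s t hvs hvt
        intro l hlC
        by_cases hli : l = i
        · rw [hli, hsi, hti]
        · have hlJ := hsub l hlC hli
          rw [hsu1 l hlJ, htu1 l hlJ]
      have h2 : θ j s' = θ j t' := by
        apply hθ.2 j s' t' hvs' hvt'
        intro l hlC
        by_cases hli : l = i
        · rw [hli, hs'i, ht'i]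
        · have hlJ := hsub l hlC hli
          rw [hs'u2 l hlJ, ht'u2 l hlJ]
      rw [h1, h2]
    · push_neg at hmeet
      have h1 : θ j s = θ j s' := by
        apply hθ.2 j s s' hvs hvs'
        intro l hlC
        exact hout l (hmeet l hlC)
      have h2 : θ j t = θ j t' := by
        apply hθ.2 j t t' hvt hvt'
        intro l hlC
        exact htout l (hmeet l hlC)
      rw [h1, h2, sub_self, sub_self]
  · simp [hij]
end

section
/- In any run of the online algorithm ALG of Figure 3 on a complaint sequence of length T, the total amount by which barriers are reduced is bounded by the total barrier value created: Σ_{t=1}^T Σ_{i=1}^k Σ_{j∈N(i)} δ^t_{i→j} ≤ Σ_{i=1}^k f_i c_i. -/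
open scoped BigOperators Classical

/-- The result of fixing vertex `i` in configuration `s`: vertex `i` becomes fixed and all
its neighbors in `G` become unfixed. -/
noncomputable def fixStep {k : ℕ} (G : SimpleGraph (Fin k)) (s : Fin k → Bool) (i : Fin k) :
    Fin k → Bool :=
  fun l => if l = i then true else if G.Adj i l then false else s l

/-- A run of the online algorithm ALG of Figure 3 on the complaint sequence `seq`
(`seq t = (i_t, ℓ_t)`), with fixing costs `c`.  `s t` is the configuration before
processing complaint `t`, `tau` and `kap` the counters `τ` and `κ` before processing
complaint `t`, `δ t i j` the amount by which step (b), while processing the complaint at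
vertex `i` at time `t`, reduced `κ_j`, and `doesFix t` records whether the complained
vertex is fixed at step (c) of time `t`. -/
structure AlgRun {k : ℕ} (G : SimpleGraph (Fin k)) (c : Fin k → ℝ)
    (seq : ℕ → Fin k × ℝ) where
  s : ℕ → Fin k → Bool
  tau : ℕ → Fin k → ℝ
  kap : ℕ → Fin k → ℝ
  δ : ℕ → Fin k → Fin k → ℝ
  doesFix : ℕ → Bool
  h_s0 : ∀ i, s 0 i = false
  h_tau0 : ∀ i, tau 0 i = 0
  h_kap0 : ∀ i, kap 0 i = 0
  /-- barrier reductions are nonnegative -/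
  h_δ_nonneg : ∀ t i j, 0 ≤ δ t i j
  /-- only the complaint at the current unfixed vertex reduces barriers, and only those of
  its neighbors -/
  h_δ_supp : ∀ t i j, δ t i j ≠ 0 →
    i = (seq t).1 ∧ G.Adj i j ∧ s t i = false
  /-- a barrier is reduced by at most its current value -/
  h_δ_le : ∀ t j, G.Adj (seq t).1 j → δ t (seq t).1 j ≤ kap t j
  /-- the total reduction is at most the complaint loss -/
  h_δ_sum : ∀ t, s t (seq t).1 = false → (∑ j, δ t (seq t).1 j) ≤ (seq t).2
  /-- exit condition of the while loop of step (b): the loss is exhausted or all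
  neighboring barriers are zero -/
  h_exit : ∀ t, s t (seq t).1 = false →
    ((∑ j, δ t (seq t).1 j) = (seq t).2 ∨
      ∀ j, G.Adj (seq t).1 j → kap t j - δ t (seq t).1 j = 0)
  /-- step (c): the complained vertex is fixed iff `τ_i ≥ max(c_i, ∑_{j∈N(i)} κ_j)` -/
  h_fix_iff : ∀ t, s t (seq t).1 = false →
    (doesFix t = true ↔
      max (c (seq t).1)
        (∑ j, if G.Adj (seq t).1 j then kap t j - δ t (seq t).1 j else 0) ≤
        tau t (seq t).1 + (seq t).2)
  /-- a complaint at a fixed vertex changes nothing -/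
  h_fixed_step : ∀ t, s t (seq t).1 = true →
    doesFix t = false ∧ (∀ i, s (t + 1) i = s t i) ∧
      (∀ i, tau (t + 1) i = tau t i) ∧ (∀ i, kap (t + 1) i = kap t i)
  /-- state and counter updates when the complained vertex gets fixed -/
  h_step_fix : ∀ t, s t (seq t).1 = false → doesFix t = true →
    (∀ i, s (t + 1) i = fixStep G (s t) (seq t).1 i) ∧
      tau (t + 1) (seq t).1 = 0 ∧
      (∀ j, G.Adj (seq t).1 j → tau (t + 1) j = 0) ∧
      (∀ j, j ≠ (seq t).1 → ¬ G.Adj (seq t).1 j → tau (t + 1) j = tau t j) ∧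
      kap (t + 1) (seq t).1 = c (seq t).1 ∧
      (∀ j, j ≠ (seq t).1 → kap (t + 1) j = kap t j - δ t (seq t).1 j)
  /-- state and counter updates when the complained vertex is not fixed -/
  h_step_nofix : ∀ t, s t (seq t).1 = false → doesFix t = false →
    (∀ i, s (t + 1) i = s t i) ∧
      tau (t + 1) (seq t).1 = tau t (seq t).1 + (seq t).2 ∧
      (∀ j, j ≠ (seq t).1 → tau (t + 1) j = tau t j) ∧
      (∀ j, kap (t + 1) j = kap t j - δ t (seq t).1 j)

namespace AlgRun

variable {k : ℕ} {G : SimpleGraph (Fin k)} {c : Fin k → ℝ} {seq : ℕ → Fin k × ℝ}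

/-- Total loss of the online algorithm over the first `T` complaints: losses of complaints
arriving at unfixed vertices plus all fixing costs incurred. -/
noncomputable def loss (R : AlgRun G c seq) (T : ℕ) : ℝ :=
  ∑ t ∈ Finset.range T,
    ((if R.s t (seq t).1 = false then (seq t).2 else 0) +
      (if R.doesFix t then c (seq t).1 else 0))

/-- `f_i`: the number of times the run fixes vertex `i` during the first `T` steps. -/
noncomputable def fixCount (R : AlgRun G c seq) (T : ℕ) (i : Fin k) : ℕ :=
  ((Finset.range T).filter (fun t => R.doesFix t = true ∧ (seq t).1 = i)).card

/-- `δ^t_{i→i}`: the loss retained at vertex `i` at time `t`,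
`ℓ_t·1(i_t = i) − ∑_{j ∈ N(i)} δ^t_{i→j}`. -/
noncomputable def deltaSelf (R : AlgRun G c seq) (t : ℕ) (i : Fin k) : ℝ :=
  (if (seq t).1 = i then (seq t).2 else 0) - ∑ j, if G.Adj i j then R.δ t i j else 0

end AlgRun

/-- The state sequence of an offline algorithm that at each step `t`, after seeing
complaint `t`, either does nothing (`σ t = none`) or fixes the vertex `σ t`. -/
noncomputable def offStates {k : ℕ} (G : SimpleGraph (Fin k))
    (σ : ℕ → Option (Fin k)) : ℕ → Fin k → Bool
  | 0 => fun _ => false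
  | t + 1 =>
    match σ t with
    | none => offStates G σ t
    | some i => fixStep G (offStates G σ t) i

/-- Total loss of the offline algorithm `σ` over the first `T` complaints. -/
noncomputable def offLoss {k : ℕ} (G : SimpleGraph (Fin k)) (c : Fin k → ℝ)
    (seq : ℕ → Fin k × ℝ) (σ : ℕ → Option (Fin k)) (T : ℕ) : ℝ :=
  ∑ t ∈ Finset.range T,
    ((if offStates G σ t (seq t).1 = false then (seq t).2 else 0) +
      (match σ t with | none => 0 | some i => c i))

/-- The loss of the optimal offline algorithm OPT over the first `T` complaints. -/
noncomputable def optLoss {k : ℕ} (G : SimpleGraph (Fin k)) (c : Fin k → ℝ)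
    (seq : ℕ → Fin k × ℝ) (T : ℕ) : ℝ :=
  ⨅ σ : ℕ → Option (Fin k), offLoss G c seq σ T

namespace AlgRun

variable {k : ℕ} {G : SimpleGraph (Fin k)} {c : Fin k → ℝ} {seq : ℕ → Fin k × ℝ}

lemma aux_delta_zero (R : AlgRun G c seq) {t : ℕ} {i j : Fin k}
    (h : ¬ (i = (seq t).1 ∧ G.Adj i j)) : R.δ t i j = 0 := by
  by_contra h0
  obtain ⟨h1, h2, _⟩ := R.h_δ_supp t i j h0
  exact h ⟨h1, h2⟩

lemma aux_kap_nonneg (R : AlgRun G c seq) (hc : ∀ i, 1 ≤ c i) :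
    ∀ t j, 0 ≤ R.kap t j := by
  intro t
  induction t with
  | zero => intro j; simp [R.h_kap0]
  | succ t ih =>
    intro j
    by_cases hs : R.s t (seq t).1 = true
    · rw [(R.h_fixed_step t hs).2.2.2 j]; exact ih j
    · have hs' : R.s t (seq t).1 = false := by simpa using hs
      have hd : 0 ≤ R.kap t j - R.δ t (seq t).1 j := by
        by_cases hz : R.δ t (seq t).1 j = 0
        · simpa [hz] using ih j
        · have hadj := (R.h_δ_supp t _ j hz).2.1
          have := R.h_δ_le t j hadj
          linarith
      by_cases hf : R.doesFix t = true
      · obtain ⟨_, _, _, _, hki, hkj⟩ := R.h_step_fix t hs' hf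
        by_cases hji : j = (seq t).1
        · subst hji; rw [hki]; linarith [hc (seq t).1]
        · rw [hkj j hji]; exact hd
      · have hf' : R.doesFix t = false := by simpa using hf
        obtain ⟨_, _, _, hk⟩ := R.h_step_nofix t hs' hf'
        rw [hk j]; exact hd

lemma aux_D_eq (R : AlgRun G c seq) (t : ℕ) :
    (∑ i, ∑ j, if G.Adj i j then R.δ t i j else 0) = ∑ j, R.δ t (seq t).1 j := by
  have h1 : ∀ i j : Fin k, (if G.Adj i j then R.δ t i j else 0) = R.δ t i j := by
    intro i j
    by_cases h : G.Adj i j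
    · simp [h]
    · simp [h, R.aux_delta_zero (by tauto)]
  simp only [h1]
  rw [Finset.sum_eq_single (seq t).1]
  · intro i _ hi
    apply Finset.sum_eq_zero
    intro j _
    exact R.aux_delta_zero (by tauto)
  · simp

lemma aux_step_ineq (R : AlgRun G c seq) (hc : ∀ i, 1 ≤ c i) (t : ℕ) :
    (∑ i, ∑ j, if G.Adj i j then R.δ t i j else 0) + ∑ j, R.kap (t + 1) j ≤
      (if R.doesFix t then c (seq t).1 else 0) + ∑ j, R.kap t j := by
  rw [R.aux_D_eq t]
  by_cases hs : R.s t (seq t).1 = true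
  · obtain ⟨hf, _, _, hk⟩ := R.h_fixed_step t hs
    have hδ : ∀ j, R.δ t (seq t).1 j = 0 := by
      intro j
      by_contra h0
      have := (R.h_δ_supp t _ j h0).2.2
      rw [hs] at this; exact Bool.true_eq_false.mp this
    have hif : (if R.doesFix t then c (seq t).1 else 0) = 0 := by simp [hf]
    simp only [hδ, hk, hif]
    simp
  · have hs' : R.s t (seq t).1 = false := by simpa using hs
    by_cases hf : R.doesFix t = true
    · obtain ⟨_, _, _, _, hki, hkj⟩ := R.h_step_fix t hs' hf
      have hself : R.δ t (seq t).1 (seq t).1 = 0 :=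
        R.aux_delta_zero (by simp [G.irrefl])
      have e1 : ∑ j, R.kap (t + 1) j =
          c (seq t).1 + ∑ j ∈ {(seq t).1}ᶜ, (R.kap t j - R.δ t (seq t).1 j) := by
        rw [Fintype.sum_eq_add_sum_compl (seq t).1, hki]
        congr 1
        exact Finset.sum_congr rfl fun j hj => hkj j (by simpa using hj)
      have e2 : ∑ j, (R.kap t j - R.δ t (seq t).1 j) =
          (R.kap t (seq t).1 - R.δ t (seq t).1 (seq t).1) +
            ∑ j ∈ {(seq t).1}ᶜ, (R.kap t j - R.δ t (seq t).1 j) :=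
        Fintype.sum_eq_add_sum_compl _ _
      have hknn := R.aux_kap_nonneg hc t (seq t).1
      rw [Finset.sum_sub_distrib] at e2
      simp only [hf, if_true]
      linarith
    · have hf' : R.doesFix t = false := by simpa using hf
      obtain ⟨_, _, _, hk⟩ := R.h_step_nofix t hs' hf'
      have hif : (if R.doesFix t then c (seq t).1 else 0) = 0 := by simp [hf']
      rw [hif]
      have : ∑ j, R.kap (t + 1) j = ∑ j, (R.kap t j - R.δ t (seq t).1 j) :=
        Finset.sum_congr rfl fun j _ => hk j
      rw [this, Finset.sum_sub_distrib]
      linarith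

end AlgRun

/-- in any run of ALG on a complaint sequence of length `T`, the total
amount by which barriers are reduced is bounded by the total barrier value created:
`∑_{t=1}^T ∑_i ∑_{j∈N(i)} δ^t_{i→j} ≤ ∑_i f_i c_i`. -/
theorem stmt_13 {k : ℕ} (G : SimpleGraph (Fin k)) (c : Fin k → ℝ)
    (hc : ∀ i, 1 ≤ c i) (B : ℝ)
    (seq : ℕ → Fin k × ℝ) (hseq : ∀ t, (seq t).2 ∈ Set.Icc (0 : ℝ) B)
    (T : ℕ) (R : AlgRun G c seq) :
    ∑ t ∈ Finset.range T, ∑ i, ∑ j, (if G.Adj i j then R.δ t i j else 0) ≤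
      ∑ i, (R.fixCount T i : ℝ) * c i := by
  have key : ∀ S : ℕ,
      (∑ t ∈ Finset.range S, ∑ i, ∑ j, (if G.Adj i j then R.δ t i j else 0)) +
        ∑ j, R.kap S j ≤
        ∑ t ∈ Finset.range S, (if R.doesFix t then c (seq t).1 else 0) := by
    intro S
    induction S with
    | zero => simp [R.h_kap0]
    | succ S ih =>
      rw [Finset.sum_range_succ, Finset.sum_range_succ]
      have := R.aux_step_ineq hc S
      linarith
  have h2 : 0 ≤ ∑ j, R.kap T j :=
    Finset.sum_nonneg fun j _ => R.aux_kap_nonneg hc T j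
  have h3 : ∑ t ∈ Finset.range T, (if R.doesFix t then c (seq t).1 else 0) =
      ∑ i, (R.fixCount T i : ℝ) * c i := by
    have e1 : ∀ t, (if R.doesFix t then c (seq t).1 else 0) =
        ∑ i, (if R.doesFix t = true ∧ (seq t).1 = i then c i else 0) := by
      intro t
      by_cases hf : R.doesFix t = true
      · simp [hf, Finset.sum_ite_eq]
      · simp [hf]
    simp only [e1]
    rw [Finset.sum_comm]
    refine Finset.sum_congr rfl fun i _ => ?_
    rw [AlgRun.fixCount, ← Finset.sum_filter, Finset.sum_const, nsmul_eq_mul]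
  rw [← h3]
  linarith [key T]
end

section
/- In any run of the online algorithm ALG of Figure 3 on a complaint sequence of length T, the total loss of ALG satisfies Loss(ALG) ≤ Σ_{i=1}^k 2 f_i c_i + Σ_{i=1}^k Σ_{t=1}^T δ^t_{i→i}. -/
open scoped BigOperators Classical

namespace AlgRun
section Aux
variable {k : ℕ} {G : SimpleGraph (Fin k)} {c : Fin k → ℝ} {seq : ℕ → Fin k × ℝ}

lemma delta_zero (R : AlgRun G c seq) {t : ℕ} {i j : Fin k}
    (h : ¬(i = (seq t).1 ∧ G.Adj i j ∧ R.s t i = false)) : R.δ t i j = 0 := by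
  by_contra hne
  exact h (R.h_δ_supp t i j hne)

lemma delta_self_zero (R : AlgRun G c seq) (t : ℕ) (i : Fin k) : R.δ t i i = 0 :=
  R.delta_zero (by simp [SimpleGraph.irrefl])

lemma kap_bounds (hc : ∀ i, 1 ≤ c i) (R : AlgRun G c seq) :
    ∀ t j, 0 ≤ R.kap t j ∧ R.kap t j ≤ c j := by
  intro t
  induction t with
  | zero =>
    intro j; rw [R.h_kap0 j]
    exact ⟨le_refl 0, le_trans zero_le_one (hc j)⟩
  | succ t ih =>
    intro j
    have hdlej : R.δ t (seq t).1 j ≤ R.kap t j := by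
      by_cases hadj : G.Adj (seq t).1 j
      · exact R.h_δ_le t j hadj
      · rw [R.delta_zero (by tauto)]; exact (ih j).1
    by_cases hs : R.s t (seq t).1 = true
    · rw [(R.h_fixed_step t hs).2.2.2 j]; exact ih j
    · have hs' : R.s t (seq t).1 = false := by simpa using hs
      by_cases hf : R.doesFix t = true
      · obtain ⟨_, _, _, _, hki, hkj⟩ := R.h_step_fix t hs' hf
        by_cases hji : j = (seq t).1
        · rw [hji, hki]
          exact ⟨le_trans zero_le_one (hc _), le_refl _⟩
        · rw [hkj j hji]
          have h1 := R.h_δ_nonneg t (seq t).1 j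
          have h2 := (ih j).2
          constructor <;> linarith
      · have hf' : R.doesFix t = false := by simpa using hf
        obtain ⟨_, _, _, hkj⟩ := R.h_step_nofix t hs' hf'
        rw [hkj j]
        have h1 := R.h_δ_nonneg t (seq t).1 j
        have h2 := (ih j).2
        constructor <;> linarith

/-- total barrier potential -/
noncomputable def Phi (R : AlgRun G c seq) (t : ℕ) : ℝ := ∑ j, R.kap t j

/-- total reduction at time `t` -/
noncomputable def Dt (R : AlgRun G c seq) (t : ℕ) : ℝ := ∑ j, R.δ t (seq t).1 j

lemma Dt_nonneg (R : AlgRun G c seq) (t : ℕ) : 0 ≤ R.Dt t :=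
  Finset.sum_nonneg fun j _ => R.h_δ_nonneg t _ j

lemma Phi_step (hc : ∀ i, 1 ≤ c i) (R : AlgRun G c seq) (t : ℕ) :
    R.Phi (t + 1) ≤ R.Phi t - R.Dt t + (if R.doesFix t then c (seq t).1 else 0) := by
  unfold Phi Dt
  by_cases hs : R.s t (seq t).1 = true
  · obtain ⟨hdf, _, _, hk⟩ := R.h_fixed_step t hs
    have hD : ∀ j : Fin k, R.δ t (seq t).1 j = 0 := fun j =>
      R.delta_zero (by simp [hs])
    simp [hdf, hD, hk]
  · have hs' : R.s t (seq t).1 = false := by simpa using hs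
    by_cases hf : R.doesFix t = true
    · obtain ⟨_, _, _, _, hki, hkj⟩ := R.h_step_fix t hs' hf
      have key : ∀ j : Fin k, R.kap (t+1) j ≤
          (R.kap t j - R.δ t (seq t).1 j) + (if j = (seq t).1 then c (seq t).1 else 0) := by
        intro j
        by_cases hji : j = (seq t).1
        · rw [hji, hki, R.delta_self_zero t (seq t).1, if_pos rfl]
          have := (kap_bounds hc R t (seq t).1).1
          linarith
        · rw [hkj j hji, if_neg hji]
          simp
      calc (∑ j, R.kap (t+1) j)
          ≤ ∑ j, ((R.kap t j - R.δ t (seq t).1 j) + (if j = (seq t).1 then c (seq t).1 else 0)) :=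
            Finset.sum_le_sum fun j _ => key j
        _ = (∑ j, R.kap t j) - (∑ j, R.δ t (seq t).1 j)
              + (if R.doesFix t then c (seq t).1 else 0) := by
            rw [Finset.sum_add_distrib, Finset.sum_sub_distrib,
              Finset.sum_ite_eq' Finset.univ ((seq t).1) (fun _ => c (seq t).1)]
            simp [hf]
    · have hf' : R.doesFix t = false := by simpa using hf
      obtain ⟨_, _, _, hkj⟩ := R.h_step_nofix t hs' hf'
      simp [hf', hkj, Finset.sum_sub_distrib]

lemma Dt_sum_le (hc : ∀ i, 1 ≤ c i) (R : AlgRun G c seq) (T : ℕ) :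
    R.Phi T + ∑ t ∈ Finset.range T, R.Dt t ≤
      ∑ t ∈ Finset.range T, (if R.doesFix t then c (seq t).1 else 0) := by
  induction T with
  | zero => simp [Phi, R.h_kap0]
  | succ T ih =>
    rw [Finset.sum_range_succ, Finset.sum_range_succ]
    have := Phi_step hc R T
    linarith

end Aux
end AlgRun

/-- in any run of ALG on a complaint sequence of length `T`,
`Loss(ALG) ≤ ∑_i 2 f_i c_i + ∑_i ∑_t δ^t_{i→i}`. -/
theorem stmt_14 {k : ℕ} (G : SimpleGraph (Fin k)) (c : Fin k → ℝ)
    (hc : ∀ i, 1 ≤ c i) (B : ℝ)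
    (seq : ℕ → Fin k × ℝ) (hseq : ∀ t, (seq t).2 ∈ Set.Icc (0 : ℝ) B)
    (T : ℕ) (R : AlgRun G c seq) :
    R.loss T ≤ ∑ i, 2 * (R.fixCount T i : ℝ) * c i +
      ∑ i, ∑ t ∈ Finset.range T, R.deltaSelf t i := by
  classical
  set F : ℝ := ∑ t ∈ Finset.range T, (if R.doesFix t then c (seq t).1 else 0) with hF
  have hPhiT : 0 ≤ R.Phi T :=
    Finset.sum_nonneg fun j _ => (AlgRun.kap_bounds hc R T j).1
  have hD : ∑ t ∈ Finset.range T, R.Dt t ≤ F := by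
    have := AlgRun.Dt_sum_le hc R T
    linarith
  have hfix : ∑ i, 2 * (R.fixCount T i : ℝ) * c i = 2 * F := by
    have h1 : ∀ i : Fin k, (R.fixCount T i : ℝ) * c i =
        ∑ t ∈ Finset.range T, (if R.doesFix t = true ∧ (seq t).1 = i then c i else 0) := by
      intro i
      rw [← Finset.sum_filter, Finset.sum_const, nsmul_eq_mul]
      simp [AlgRun.fixCount]
    calc ∑ i, 2 * (R.fixCount T i : ℝ) * c i
        = 2 * ∑ i, (R.fixCount T i : ℝ) * c i := by
          rw [Finset.mul_sum]
          exact Finset.sum_congr rfl fun i _ => by ring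
      _ = 2 * ∑ i, ∑ t ∈ Finset.range T,
            (if R.doesFix t = true ∧ (seq t).1 = i then c i else 0) := by
          rw [Finset.sum_congr rfl fun i _ => h1 i]
      _ = 2 * F := by
          rw [hF, Finset.sum_comm]
          congr 1
          refine Finset.sum_congr rfl fun t _ => ?_
          by_cases hf : R.doesFix t = true
          · simp [hf]
          · simp [hf]
  have hδsum : ∑ i, ∑ t ∈ Finset.range T, R.deltaSelf t i =
      ∑ t ∈ Finset.range T, ((seq t).2 - R.Dt t) := by
    rw [Finset.sum_comm]
    refine Finset.sum_congr rfl fun t _ => ?_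
    unfold AlgRun.deltaSelf AlgRun.Dt
    rw [Finset.sum_sub_distrib]
    congr 1
    · simp
    · have hterm : ∀ i j : Fin k, (if G.Adj i j then R.δ t i j else 0)
          = (if i = (seq t).1 then R.δ t i j else 0) := by
        intro i j
        by_cases hi : i = (seq t).1
        · by_cases hadj : G.Adj i j
          · subst hi; simp [hadj]
          · rw [R.delta_zero fun h => hadj h.2.1]; simp
        · rw [R.delta_zero fun h => hi h.1]; simp [hi]
      rw [Finset.sum_congr rfl fun i (_ : i ∈ Finset.univ) =>
        Finset.sum_congr rfl fun j (_ : j ∈ Finset.univ) => hterm i j]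
      rw [Finset.sum_comm]
      exact Finset.sum_congr rfl fun j _ => by simp
  have hloss : R.loss T ≤ ∑ t ∈ Finset.range T, (seq t).2 + F := by
    unfold AlgRun.loss
    rw [hF, ← Finset.sum_add_distrib]
    refine Finset.sum_le_sum fun t _ => ?_
    have hl := (hseq t).1
    by_cases hs : R.s t (seq t).1 = false <;> simp [hs] <;> linarith
  rw [hfix, hδsum, Finset.sum_sub_distrib]
  linarith
end

section
/- Consider a run of the online algorithm ALG of Figure 3 and of the optimal offline algorithm OPT on the same complaint sequence; let s*_t denote OPT's state at time t, let ℓ*_{i(t)} = ℓ_t·1(i_t=i)·1(s*_t(i)=0) be OPT's loss on criterion i at time t, and define the augmented loss ℓ̃_{i(t)} = ℓ*_{i(t)} + Σ_{j∈N(i)} δ^t_{j→i}·1(s*_t(j)=0). Then Σ_{i=1}^k Σ_{t=1}^T ℓ̃_{i(t)} ≤ 2·Loss(OPT). -/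
open scoped BigOperators Classical

/-- run ALG and the optimal offline algorithm OPT (an offline strategy `σ`
of minimal loss, with states `s*_t = offStates G σ t`) on the same complaint sequence.
With `ℓ*_{i(t)} = ℓ_t·1(i_t = i)·1(s*_t(i) = 0)` and the augmented loss
`ℓ̃_{i(t)} = ℓ*_{i(t)} + ∑_{j∈N(i)} δ^t_{j→i}·1(s*_t(j) = 0)`, one has
`∑_i ∑_t ℓ̃_{i(t)} ≤ 2·Loss(OPT)`. -/
theorem stmt_16 {k : ℕ} (G : SimpleGraph (Fin k)) (c : Fin k → ℝ)
    (hc : ∀ i, 1 ≤ c i) (B : ℝ) (hB : 1 ≤ B)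
    (seq : ℕ → Fin k × ℝ) (hseq : ∀ t, (seq t).2 ∈ Set.Icc (0 : ℝ) B)
    (T : ℕ) (R : AlgRun G c seq)
    (σ : ℕ → Option (Fin k))
    (hσopt : ∀ σ' : ℕ → Option (Fin k), offLoss G c seq σ T ≤ offLoss G c seq σ' T) :
    ∑ i, ∑ t ∈ Finset.range T,
      ((if (seq t).1 = i ∧ offStates G σ t i = false then (seq t).2 else 0) +
        ∑ j, if G.Adj i j ∧ offStates G σ t j = false then R.δ t j i else 0) ≤
      2 * offLoss G c seq σ T := by

  have hseq0 : ∀ t, 0 ≤ (seq t).2 := fun t => (hseq t).1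
  rw [Finset.sum_comm]
  have key : ∀ t ∈ Finset.range T,
      (∑ i, ((if (seq t).1 = i ∧ offStates G σ t i = false then (seq t).2 else 0) +
        ∑ j, if G.Adj i j ∧ offStates G σ t j = false then R.δ t j i else 0)) ≤
      2 * ((if offStates G σ t (seq t).1 = false then (seq t).2 else 0) +
        (match σ t with | none => 0 | some i => c i)) := by
    intro t _
    set L : ℝ := if offStates G σ t (seq t).1 = false then (seq t).2 else 0 with hL
    have hLnn : 0 ≤ L := by
      rw [hL]; split
      · exact hseq0 t
      · exact le_rfl
    have hcost : 0 ≤ (match σ t with | none => (0:ℝ) | some i => c i) := by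
      cases hσ : σ t with
      | none => simp
      | some i => simpa using le_trans zero_le_one (hc i)
    rw [Finset.sum_add_distrib]
    have h1 : (∑ i, if (seq t).1 = i ∧ offStates G σ t i = false then (seq t).2 else 0) = L := by
      rw [Finset.sum_eq_single ((seq t).1)]
      · rw [hL]; simp
      · intro b _ hb
        have : (seq t).1 ≠ b := fun h => hb h.symm
        simp [this]
      · simp
    have h2 : (∑ i, ∑ j, if G.Adj i j ∧ offStates G σ t j = false then R.δ t j i else 0) ≤ L := by
      by_cases hstar : offStates G σ t (seq t).1 = false
      · by_cases halg : R.s t (seq t).1 = false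
        · have hin : ∀ i, (∑ j, if G.Adj i j ∧ offStates G σ t j = false then R.δ t j i else 0)
              ≤ R.δ t (seq t).1 i := by
            intro i
            have hle : (∑ j, if G.Adj i j ∧ offStates G σ t j = false then R.δ t j i else 0)
                ≤ ∑ j, if j = (seq t).1 then R.δ t j i else 0 := by
              apply Finset.sum_le_sum
              intro j _
              by_cases hj : j = (seq t).1
              · subst hj
                split
                · simp
                · simp [R.h_δ_nonneg]
              · have hz : R.δ t j i = 0 := by
                  by_contra h
                  exact hj ((R.h_δ_supp t j i h).1)
                simp [hj, hz]
            simpa using hle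
          calc (∑ i, ∑ j, if G.Adj i j ∧ offStates G σ t j = false then R.δ t j i else 0)
              ≤ ∑ i, R.δ t (seq t).1 i := Finset.sum_le_sum (fun i _ => hin i)
            _ ≤ (seq t).2 := R.h_δ_sum t halg
            _ = L := by rw [hL]; simp [hstar]
        · have hz : ∀ i j, (if G.Adj i j ∧ offStates G σ t j = false then R.δ t j i else 0) = 0 := by
            intro i j
            split
            · by_contra h
              have := R.h_δ_supp t j i h
              rw [this.1] at this
              exact halg this.2.2
            · rfl
          calc (∑ i, ∑ j, if G.Adj i j ∧ offStates G σ t j = false then R.δ t j i else 0)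
              = 0 := by simp [hz]
            _ ≤ L := hLnn
      · have hz : ∀ i j, (if G.Adj i j ∧ offStates G σ t j = false then R.δ t j i else 0) = 0 := by
          intro i j
          split
          · rename_i hcond
            by_contra h
            have hj := (R.h_δ_supp t j i h).1
            rw [hj] at hcond
            exact hstar hcond.2
          · rfl
        calc (∑ i, ∑ j, if G.Adj i j ∧ offStates G σ t j = false then R.δ t j i else 0)
            = 0 := by simp [hz]
          _ ≤ L := hLnn
    rw [h1]
    linarith
  calc (∑ t ∈ Finset.range T, ∑ i, ((if (seq t).1 = i ∧ offStates G σ t i = false then (seq t).2 else 0) +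
        ∑ j, if G.Adj i j ∧ offStates G σ t j = false then R.δ t j i else 0))
      ≤ ∑ t ∈ Finset.range T, 2 * ((if offStates G σ t (seq t).1 = false then (seq t).2 else 0) +
        (match σ t with | none => 0 | some i => c i)) := Finset.sum_le_sum key
    _ = 2 * offLoss G c seq σ T := by rw [offLoss, ← Finset.mul_sum]
end

section
/- Fix integers k ≥ 1 and T ≥ 2. Consider 2k counters τ_i^b (i ∈ {1,...,k}, b ∈ {0,1}), each initialized to a value in [1, T]. In each episode h = 1, 2, ..., an arbitrary vector s_h ∈ {0,1}^k is chosen and each of the k counters τ_i^{s_h(i)} is increased by t(h) = min_{i} τ_i^{s_h(i)} (the minimum taken over the values at the start of episode h). Then the number of episodes that can occur while the total elapsed time Σ_h t(h) remains at most T is bounded by 2k·(log₂ T + 2). -/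
open scoped BigOperators

/-- the episode-counting (doubling) argument.  There are `2k` counters
`τ_i^b`, each initialized to a value in `[1,T]`.  In episode `h` an arbitrary vector
`s h ∈ {0,1}^k` is chosen and each of the `k` counters `τ_i^{s h i}` is increased by
`t(h) = min_i τ_i^{s h i}` (minimum over values at the start of episode `h`); the other
counters are unchanged.  Then the number of episodes that can occur while the total
elapsed time `∑_h t(h)` remains at most `T` is at most `2k(log₂ T + 2)`. -/
theorem stmt_18 (k T : ℕ) (hk : 1 ≤ k) (hT : 2 ≤ T)
    (τ : ℕ → Fin k → Bool → ℝ) (s : ℕ → Fin k → Bool) (tmin : ℕ → ℝ)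
    (hinit : ∀ (i : Fin k) (b : Bool), τ 0 i b ∈ Set.Icc (1 : ℝ) (T : ℝ))
    (htmin_le : ∀ (h : ℕ) (i : Fin k), tmin h ≤ τ h i (s h i))
    (htmin_mem : ∀ h : ℕ, ∃ i : Fin k, tmin h = τ h i (s h i))
    (hupd : ∀ (h : ℕ) (i : Fin k), τ (h + 1) i (s h i) = τ h i (s h i) + tmin h)
    (hupd' : ∀ (h : ℕ) (i : Fin k) (b : Bool), b ≠ s h i → τ (h + 1) i b = τ h i b)
    (H : ℕ) (hsum : ∑ h ∈ Finset.range H, tmin h ≤ (T : ℝ)) :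
    (H : ℝ) ≤ 2 * k * (Real.logb 2 T + 2) := by
  classical
  -- all counters are at least 1
  have hpos : ∀ h i b, (1:ℝ) ≤ τ h i b := by
    intro h
    induction h with
    | zero => intro i b; exact (hinit i b).1
    | succ h ih =>
      have htm : (1:ℝ) ≤ tmin h := by
        obtain ⟨i, hi⟩ := htmin_mem h
        rw [hi]; exact ih i (s h i)
      intro i b
      by_cases hb : b = s h i
      · subst hb; rw [hupd]; linarith [ih i (s h i)]
      · rw [hupd' h i b hb]; exact ih i b
  have htm1 : ∀ h, (1:ℝ) ≤ tmin h := fun h => by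
    obtain ⟨i, hi⟩ := htmin_mem h; rw [hi]; exact hpos h i (s h i)
  -- counters are monotone
  have hmono : ∀ h i b, τ h i b ≤ τ (h+1) i b := by
    intro h i b
    by_cases hb : b = s h i
    · subst hb; rw [hupd]; linarith [htm1 h]
    · rw [hupd' h i b hb]
  -- choose the argmin
  choose g hg using htmin_mem
  set f : ℕ → Fin k × Bool := fun h => (g h, s h (g h)) with hf
  -- upper bound on counters
  have hub : ∀ n, ∀ i b, τ n i b ≤ τ 0 i b + ∑ h ∈ Finset.range n, tmin h := by
    intro n
    induction n with
    | zero => intro i b; simp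
    | succ n ih =>
      intro i b
      rw [Finset.sum_range_succ]
      by_cases hb : b = s n i
      · subst hb; rw [hupd]; linarith [ih i (s n i)]
      · rw [hupd' n i b hb]; linarith [ih i b, htm1 n]
  -- doubling lower bound
  have hlb : ∀ n (i : Fin k) (b : Bool),
      (2:ℝ) ^ ((Finset.range n).filter (fun h => f h = (i, b))).card ≤ τ n i b := by
    intro n i b
    induction n with
    | zero => simpa using hpos 0 i b
    | succ n ih =>
      rw [Finset.range_add_one, Finset.filter_insert]
      by_cases hfb : f n = (i, b)
      · rw [if_pos hfb, Finset.card_insert_of_notMem (by simp)]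
        have hb : b = s n i := by
          have := hfb; simp [hf, Prod.ext_iff] at this
          rw [← this.1]; exact this.2.symm
        have hi : g n = i := by simp [hf, Prod.ext_iff] at hfb; exact hfb.1
        have hτ : τ (n+1) i b = 2 * τ n i b := by
          subst hb
          rw [hupd n i, hg n, hi]; ring
        rw [hτ, pow_succ]
        have h1 : (1:ℝ) ≤ τ n i b := hpos n i b
        nlinarith [ih]
      · rw [if_neg hfb]
        exact le_trans ih (hmono n i b)
  -- each fiber has size at most logb 2 T + 2
  have hfiber : ∀ p : Fin k × Bool,
      ((((Finset.range H).filter (fun h => f h = p)).card : ℝ)) ≤ Real.logb 2 T + 2 := by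
    intro ⟨i, b⟩
    set m := ((Finset.range H).filter (fun h => f h = (i, b))).card
    have h1 : (2:ℝ) ^ m ≤ τ H i b := hlb H i b
    have h2 : τ H i b ≤ 2 * T := by
      have := hub H i b
      have h0 := (hinit i b).2
      linarith
    have h2T : (2:ℝ)^m ≤ 2 * T := le_trans h1 h2
    have hTpos : (0:ℝ) < T := by positivity
    have hm : (m:ℝ) ≤ Real.logb 2 (2 * T) := by
      have := Real.logb_le_logb_of_le (by norm_num : (1:ℝ) < 2)
        (by positivity : (0:ℝ) < 2 ^ m) h2T
      rwa [Real.logb_pow, Real.logb_self_eq_one (by norm_num), mul_one] at this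
    have heq : Real.logb 2 (2 * T) = 1 + Real.logb 2 T := by
      rw [Real.logb_mul (by norm_num) (by positivity),
        Real.logb_self_eq_one (by norm_num)]
    linarith [hm, heq ▸ hm]
  -- count episodes fiberwise
  have hcount : (Finset.range H).card = ∑ p ∈ (Finset.univ : Finset (Fin k × Bool)),
      ((Finset.range H).filter (fun h => f h = p)).card :=
    Finset.card_eq_sum_card_fiberwise (fun x _ => Finset.mem_univ (f x))
  rw [Finset.card_range] at hcount
  have hcountR : (H:ℝ) = ∑ p ∈ (Finset.univ : Finset (Fin k × Bool)),
      (((Finset.range H).filter (fun h => f h = p)).card : ℝ) := by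
    exact_mod_cast hcount
  have hcard : (Finset.univ : Finset (Fin k × Bool)).card = 2 * k := by
    simp [Finset.card_univ, mul_comm]
  calc (H : ℝ) = ∑ p ∈ (Finset.univ : Finset (Fin k × Bool)),
        (((Finset.range H).filter (fun h => f h = p)).card : ℝ) := hcountR
    _ ≤ ∑ p ∈ (Finset.univ : Finset (Fin k × Bool)), (Real.logb 2 T + 2) :=
        Finset.sum_le_sum (fun p _ => hfiber p)
    _ = 2 * k * (Real.logb 2 T + 2) := by
        rw [Finset.sum_const, hcard]; push_cast; ring
end
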